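/- Let σ : A₁ → A₀* be a proper morphism with all images beginning with the letter l and ending with the letter r, and let σ' : A₂ → A₁* be a morphism such that every letter of A₁ occurs in σ'(e) for every e ∈ A₂. Let y ∈ A₂^ℕ and z = σσ'(y). Then the words of length 2 occurring in z are exactly the words of length 2 occurring in some σ(e), e ∈ A₁, together with the word rl; moreover every word of length 2 occurring in z occurs with gaps bounded by 2·max{|σ'(e)| : e ∈ A₂} · max{|σ(e)| : e ∈ A₁}. -/

import Mathlib

namespace DurandLR

variable {A B : Type*}

/-- `u` occurs at position `i` in the one-sided sequence `x`. -/
def OccursAt (x : ℕ → A) (u : List A) (i : ℕ) : Prop :=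
  ∀ k : Fin u.length, x (i + (k : ℕ)) = u.get k

/-- `u` occurs (somewhere) in the one-sided sequence `x`. -/
def Occurs (x : ℕ → A) (u : List A) : Prop := ∃ i, OccursAt x u i

/-- `u` occurs at position `i` in the two-sided sequence `x`. -/
def OccursAtZ (x : ℤ → A) (u : List A) (i : ℤ) : Prop :=
  ∀ k : Fin u.length, x (i + (k : ℕ)) = u.get k

def OccursZ (x : ℤ → A) (u : List A) : Prop := ∃ i, OccursAtZ x u i

/-- The word `u` has exactly `m` occurrences in the finite word `w`. -/
def OccCountEq (u w : List A) (m : ℕ) : Prop :=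
  {i : ℕ | u <+: w.drop i}.ncard = m

/-- `w` is a return word to `u` in the one-sided sequence `x`: `wu` occurs in `x`,
`u` is a prefix of `wu` and `u` has exactly two occurrences in `wu`. -/
def IsReturnWord (x : ℕ → A) (u w : List A) : Prop :=
  Occurs x (w ++ u) ∧ u <+: (w ++ u) ∧ OccCountEq u (w ++ u) 2

/-- `w` is a return word to `u` in the two-sided sequence `x`. -/
def IsReturnWordZ (x : ℤ → A) (u w : List A) : Prop :=
  OccursZ x (w ++ u) ∧ u <+: (w ++ u) ∧ OccCountEq u (w ++ u) 2

/-- `x` is uniformly recurrent: every word occurring in `x` occurs with bounded gaps. -/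
def UniformlyRecurrent (x : ℕ → A) : Prop :=
  ∀ u, Occurs x u → ∃ M : ℕ, ∀ i : ℕ, ∃ j, i ≤ j ∧ j < i + M ∧ OccursAt x u j

def UniformlyRecurrentZ (x : ℤ → A) : Prop :=
  ∀ u, OccursZ x u → ∃ M : ℕ, ∀ i : ℤ, ∃ j : ℤ, i ≤ j ∧ j < i + M ∧ OccursAtZ x u j

/-- `x` is linearly recurrent with constant `K`. -/
def LinearlyRecurrentWith (x : ℕ → A) (K : ℕ) : Prop :=
  UniformlyRecurrent x ∧ ∀ u w, IsReturnWord x u w → w.length ≤ K * u.length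

def LinearlyRecurrent (x : ℕ → A) : Prop := ∃ K, LinearlyRecurrentWith x K

def LinearlyRecurrentZ (x : ℤ → A) : Prop :=
  UniformlyRecurrentZ x ∧ ∃ K : ℕ, ∀ u w, IsReturnWordZ x u w → w.length ≤ K * u.length

/-- The subshift generated by a two-sided sequence `x` : all `z` whose finite subwords
occur in `x`. -/
def SubshiftGenZ (x : ℤ → A) : Set (ℤ → A) := {z | ∀ u, OccursZ z u → OccursZ x u}

/-- The subshift generated by a one-sided sequence `x`. -/
def SubshiftGen (x : ℕ → A) : Set (ℤ → A) := {z | ∀ u, OccursZ z u → Occurs x u}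

/-- A minimal subshift: nonempty and every element generates it. -/
def IsMinimalSubshift (X : Set (ℤ → A)) : Prop :=
  X.Nonempty ∧ ∀ z ∈ X, X = SubshiftGenZ z

/-- A linearly recurrent subshift: minimal and containing an LR sequence. -/
def IsLRSubshift (X : Set (ℤ → A)) : Prop :=
  IsMinimalSubshift X ∧ ∃ x ∈ X, LinearlyRecurrentZ x

def IsPeriodic (z : ℤ → A) : Prop := ∃ p : ℕ, 0 < p ∧ ∀ n : ℤ, z (n + p) = z n

/-- Image of a finite word under a morphism (substitution). -/
def wordMap (σ : A → List B) : List A → List B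
  | [] => []
  | a :: u => σ a ++ wordMap σ u

/-- Composition of two morphisms: `compM σ τ = σ ∘ τ`. -/
def compM (σ τ : A → List A) : A → List A := fun b => wordMap σ (τ b)

/-- Iterate of a morphism: `powM σ n = σ^n`. -/
def powM (σ : A → List A) : ℕ → A → List A
  | 0 => fun b => [b]
  | n + 1 => compM σ (powM σ n)

/-- `chain σ r n = σ_r ∘ σ_{r+1} ∘ ⋯ ∘ σ_{r+n-1}` (the empty composition for `n = 0`). -/
def chain (σ : ℕ → A → List A) (r : ℕ) : ℕ → A → List A
  | 0 => fun b => [b]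
  | n + 1 => fun b => wordMap (chain σ r n) (σ (r + n) b)

/-- The periodic infinite sequence `www⋯` obtained by repeating the word `w`
(with a default letter for the degenerate empty case). -/
def repSeq (w : List A) (d : A) : ℕ → A := fun i => w.getD (i % w.length) d

/-- The prefix of length `n` of the sequence `x`, as a word. -/
def seqTake (x : ℕ → A) (n : ℕ) : List A := (List.range n).map x

/-- `y` is the image of the infinite sequence `z` under the morphism `σ`:
the image of every prefix of `z` is a prefix of `y`. -/
def IsSeqImage (σ : A → List B) (z : ℕ → A) (y : ℕ → B) : Prop :=
  ∀ n, seqTake y (wordMap σ (seqTake z n)).length = wordMap σ (seqTake z n)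

/-- `σ_0 σ_1 ⋯ σ_n (aaa⋯)` converges to `x` in the product topology, where the `n`-th
approximation is the periodic sequence obtained by repeating the word `W n`. -/
def ConvergesTo (W : ℕ → List A) (d : A) (x : ℕ → A) : Prop :=
  ∀ m, ∃ N, ∀ n ≥ N, repSeq (W n) d m = x m

/-- A proper morphism: all images begin with the same letter and end with the same letter. -/
def ProperMorphism (σ : A → List A) : Prop :=
  ∃ l r : A, ∀ b, (σ b).head? = some l ∧ (σ b).getLast? = some r

/-- Primitivity with constant `s₀` of a directive sequence of morphisms
`σ_n : A_{n+1} → A_n^*`: every `b ∈ A_r` occurs in `σ_{r+1} ⋯ σ_{r+s₀} (c)`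
for every `c ∈ A_{r+s₀+1}`. -/
def PrimitiveWith (σ : ℕ → A → List A) (Aseq : ℕ → Set A) (s0 : ℕ) : Prop :=
  ∀ r : ℕ, ∀ b ∈ Aseq r, ∀ c ∈ Aseq (r + s0 + 1), b ∈ chain σ (r + 1) s0 c

/-- The data of an S-adic system: `a` belongs to every alphabet and
`σ_n` maps `A_{n+1}` into words over `A_n`. -/
def SAdicSystem (σ : ℕ → A → List A) (Aseq : ℕ → Set A) (a : A) : Prop :=
  (∀ n, a ∈ Aseq n) ∧ (∀ n, ∀ b ∈ Aseq (n + 1), ∀ c ∈ σ n b, c ∈ Aseq n)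

/-- `x` is the S-adic sequence generated by the directive sequence `σ` and letter `a`:
`σ_0 σ_1 ⋯ σ_n (aaa⋯)` converges to `x`. -/
def GeneratesSAdic (σ : ℕ → A → List A) (Aseq : ℕ → Set A) (a : A) (x : ℕ → A) : Prop :=
  SAdicSystem σ Aseq a ∧ ConvergesTo (fun n => chain σ 0 (n + 1) a) a x

/-- The complexity function `p_x(n)`: the number of distinct words of length `n`
occurring in `x`. -/
noncomputable def complexity (x : ℕ → A) (n : ℕ) : ℕ := {u : List A | u.length = n ∧ Occurs x u}.ncard

/-- Any two successive occurrences of `u` in `x` differ by at most `M`. -/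
def GapsBoundedBy (x : ℕ → A) (u : List A) (M : ℕ) : Prop :=
  ∀ i j, OccursAt x u i → OccursAt x u j → i < j →
    (∀ k, i < k → k < j → ¬ OccursAt x u k) → j - i ≤ M

/-- The finite word `x_{[p,q)}` of a two-sided sequence. -/
def zSeg (x : ℤ → A) (p q : ℤ) : List A := (List.range (q - p).toNat).map fun t => x (p + t)

/-- `w` is a return word to `u.v` in the two-sided sequence `x`: there are two
consecutive occurrences `j < k` of `uv` in `x` with `w = x_{[j+|u|, k+|u|)}`. -/
def IsReturnWordUV (x : ℤ → A) (u v w : List A) : Prop :=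
  ∃ j k : ℤ, OccursAtZ x (u ++ v) j ∧ OccursAtZ x (u ++ v) k ∧ j < k ∧
    (∀ i : ℤ, j < i → i < k → ¬ OccursAtZ x (u ++ v) i) ∧
    w = zSeg x (j + u.length) (k + u.length)

/-- The substitution `σ` on `{a,b,c} = {0,1,2}`: `σ(a)=acb`, `σ(b)=bab`, `σ(c)=cbc`. -/
def sigma3 : Fin 3 → List (Fin 3) := ![[0, 2, 1], [1, 0, 1], [2, 1, 2]]

/-- The substitution `τ` on `{a,b,c} = {0,1,2}`: `τ(a)=abc`, `τ(b)=acb`, `τ(c)=aac`. -/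
def tau3 : Fin 3 → List (Fin 3) := ![[0, 1, 2], [0, 2, 1], [0, 0, 2]]

/-- `rho n = σ τ σ² τ ⋯ σⁿ τ` (identity for `n = 0`). -/
def rho : ℕ → Fin 3 → List (Fin 3)
  | 0 => fun b => [b]
  | n + 1 => compM (rho n) (compM (powM sigma3 (n + 1)) tau3)

/-- `psi n l = σ^{n+2} τ σ^{n+3} τ ⋯ σ^{n+l+1} τ` (identity for `l = 0`). -/
def psi (n : ℕ) : ℕ → Fin 3 → List (Fin 3)
  | 0 => fun b => [b]
  | l + 1 => compM (psi n l) (compM (powM sigma3 (n + 2 + l)) tau3)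

/-- The Sturmian substitution `τ` on `{0,1}`: `τ(0)=0`, `τ(1)=10`. -/
def tau2 : Fin 2 → List (Fin 2) := ![[0], [1, 0]]

/-- The Sturmian substitution `σ` on `{0,1}`: `σ(0)=01`, `σ(1)=1`. -/
def sigma2 : Fin 2 → List (Fin 2) := ![[0, 1], [1]]

/-- `xi i k = τ^{i₁} σ^{i₂} τ^{i₃} ⋯ τ^{i_{2k-1}} σ^{i_{2k}}` (identity for `k = 0`). -/
def xi (i : ℕ → ℕ) : ℕ → Fin 2 → List (Fin 2)
  | 0 => fun b => [b]
  | k + 1 => compM (xi i k) (compM (powM tau2 (i (2 * k + 1))) (powM sigma2 (i (2 * k + 2))))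

/-- `a : ℕ → ℕ` gives (from index 1 on) the continued fraction expansion
`α = [0; a₁, a₂, a₃, …]`, expressed through the Gauss map. -/
def IsCFExpansion (α : ℝ) (a : ℕ → ℕ) : Prop :=
  ∃ β : ℕ → ℝ, β 0 = α ∧ ∀ n : ℕ,
    0 < β n ∧ β n < 1 ∧ (a (n + 1) : ℤ) = ⌊1 / β n⌋ ∧ β (n + 1) = 1 / β n - ⌊1 / β n⌋


section LR2Helpers

variable {C : Type*}

/-- The finite segment `x_i x_{i+1} ⋯ x_{i+m-1}` of a one-sided sequence. -/
def seg (x : ℕ → A) (i m : ℕ) : List A := (List.range m).map fun t => x (i + t)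

@[simp] lemma seg_length (x : ℕ → A) (i m : ℕ) : (seg x i m).length = m := by simp [seg]

lemma seg_getElem (x : ℕ → A) (i m j : ℕ) (h : j < (seg x i m).length) :
    (seg x i m)[j] = x (i + j) := by
  simp [seg]

lemma seg_add (x : ℕ → A) (i a b : ℕ) :
    seg x i (a + b) = seg x i a ++ seg x (i + a) b := by
  simp only [seg, List.range_add, List.map_append, List.map_map]
  congr 1
  apply List.map_congr_left
  intro t _
  simp [Function.comp_def, Nat.add_assoc]

lemma seqTake_eq_seg (x : ℕ → A) (n : ℕ) : seqTake x n = seg x 0 n := by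
  simp [seqTake, seg]

lemma occursAt_iff_seg (x : ℕ → A) (u : List A) (i : ℕ) :
    OccursAt x u i ↔ seg x i u.length = u := by
  constructor
  · intro h
    apply List.ext_getElem (by simp)
    intro j h1 h2
    have := h ⟨j, h2⟩
    simpa [seg] using this
  · intro h k
    have h2 := List.getElem_of_eq h.symm k.2
    simpa [seg] using h2.symm

lemma wordMap_append (σ : A → List B) (u v : List A) :
    wordMap σ (u ++ v) = wordMap σ u ++ wordMap σ v := by
  induction u with
  | nil => simp [wordMap]
  | cons a u ih => simp [wordMap, ih]

lemma wordMap_comp (σ : B → List A) (τ : C → List B) (w : List C) :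
    wordMap (fun e => wordMap σ (τ e)) w = wordMap σ (wordMap τ w) := by
  induction w with
  | nil => simp [wordMap]
  | cons a w ih => simp [wordMap, wordMap_append, ih]

lemma wordMap_ne_nil {σ : A → List B} (hne : ∀ a, σ a ≠ []) {v : List A} (hv : v ≠ []) :
    wordMap σ v ≠ [] := by
  cases v with
  | nil => exact absurd rfl hv
  | cons a v => simp [wordMap, hne a]

lemma head?_wordMap {σ : A → List B} {l : B} (hσ : ∀ a, (σ a).head? = some l)
    {v : List A} (hv : v ≠ []) : (wordMap σ v).head? = some l := by
  cases v with
  | nil => exact absurd rfl hv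
  | cons a v => simp [wordMap, List.head?_append, hσ a]

lemma getLast?_wordMap {σ : A → List B} {r : B} (hσ : ∀ a, (σ a).getLast? = some r)
    {v : List A} (hv : v ≠ []) : (wordMap σ v).getLast? = some r := by
  induction v with
  | nil => exact absurd rfl hv
  | cons a v ih =>
    rcases eq_or_ne v [] with rfl | hv'
    · simpa [wordMap] using hσ a
    · simp [wordMap, List.getLast?_append, ih hv']

lemma wordMap_length_le (σ : A → List B) (M : ℕ) (h : ∀ a, (σ a).length ≤ M) (v : List A) :
    (wordMap σ v).length ≤ v.length * M := by
  induction v with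
  | nil => simp [wordMap]
  | cons a v ih =>
    have := h a
    simp only [wordMap, List.length_append, List.length_cons]
    calc (σ a).length + (wordMap σ v).length ≤ M + v.length * M := by omega
      _ = (v.length + 1) * M := by ring

lemma infix_wordMap_of_mem (σ : A → List B) {b : A} {v : List A} (h : b ∈ v) :
    σ b <:+: wordMap σ v := by
  induction v with
  | nil => simp at h
  | cons a v ih =>
    rcases List.mem_cons.1 h with rfl | h'
    · exact (List.prefix_append (σ b) (wordMap σ v)).isInfix
    · exact (ih h').trans (List.suffix_append (σ a) (wordMap σ v)).isInfix

lemma infix_two_append {s t u : List A} (hu : u.length = 2) (h : u <:+: s ++ t) :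
    u <:+: s ∨ u <:+: t ∨
      ∃ a b, u = [a, b] ∧ s.getLast? = some a ∧ t.head? = some b := by
  induction s with
  | nil => exact Or.inr (Or.inl (by simpa using h))
  | cons c s ih =>
    rw [List.cons_append, List.infix_cons_iff] at h
    rcases h with h | h
    · obtain ⟨a, b, rfl⟩ : ∃ a b, u = [a, b] := by
        match u, hu with
        | [a, b], _ => exact ⟨a, b, rfl⟩
      rw [List.cons_prefix_cons] at h
      obtain ⟨rfl, h2⟩ := h
      cases s with
      | nil =>
        obtain ⟨t', rfl⟩ := h2
        exact Or.inr (Or.inr ⟨a, b, rfl, rfl, rfl⟩)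
      | cons c' s' =>
        rw [List.cons_append, List.cons_prefix_cons] at h2
        obtain ⟨rfl, _⟩ := h2
        exact Or.inl (List.IsPrefix.isInfix ⟨s', by simp⟩)
    · rcases ih h with h' | h' | ⟨a, b, rfl, h1, h2⟩
      · exact Or.inl (h'.trans (List.suffix_cons c s).isInfix)
      · exact Or.inr (Or.inl h')
      · refine Or.inr (Or.inr ⟨a, b, rfl, ?_, h2⟩)
        have hs : s ≠ [] := by rintro rfl; simp at h1
        rw [show c :: s = [c] ++ s from rfl, List.getLast?_append, h1]
        rfl

lemma infix_two_wordMap {σ : A → List B} {l r : B}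
    (hσ : ∀ b, (σ b).head? = some l ∧ (σ b).getLast? = some r)
    {v : List A} {u : List B} (hu : u.length = 2) (h : u <:+: wordMap σ v) :
    (∃ b, u <:+: σ b) ∨ u = [r, l] := by
  induction v with
  | nil =>
    rw [show wordMap σ ([] : List A) = [] from rfl, List.infix_nil] at h
    subst h; simp at hu
  | cons a v ih =>
    rw [show wordMap σ (a :: v) = σ a ++ wordMap σ v from rfl] at h
    rcases infix_two_append hu h with h' | h' | ⟨x, b, rfl, h1, h2⟩
    · exact Or.inl ⟨a, h'⟩
    · exact ih h'
    · have hv : v ≠ [] := by rintro rfl; simp [wordMap] at h2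
      have hx : x = r := by
        rw [(hσ a).2] at h1; injection h1 with h1; exact h1.symm
      have hb : b = l := by
        rw [head?_wordMap (fun b => (hσ b).1) hv] at h2; injection h2 with h2; exact h2.symm
      exact Or.inr (by rw [hx, hb])

lemma exists_block (L : ℕ → ℕ) (hL0 : L 0 = 0) (hmono : ∀ n, L n < L (n + 1)) (i : ℕ) :
    ∃ n, L n ≤ i ∧ i < L (n + 1) := by
  classical
  have hLn : ∀ n, n ≤ L n := by
    intro n
    induction n with
    | zero => omega
    | succ n ih => have := hmono n; omega
  refine ⟨Nat.findGreatest (fun n => L n ≤ i) (i + 1),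
    Nat.findGreatest_spec (P := fun n => L n ≤ i) (Nat.zero_le _) (by change L 0 ≤ i; omega), ?_⟩
  by_contra hcon
  push_neg at hcon
  have h1 : Nat.findGreatest (fun n => L n ≤ i) (i + 1) + 1 ≤ i + 1 := by
    have := hLn (Nat.findGreatest (fun n => L n ≤ i) (i + 1) + 1); omega
  exact absurd hcon
    (Nat.findGreatest_is_greatest (P := fun n => L n ≤ i) (Nat.lt_succ_self _) h1)

end LR2Helpers

/-- Let `σ : A₁ → A₀*` be proper (with first letter `l` and last letter `r`) and
`σ' : A₂ → A₁*` be such that every letter of `A₁` occurs in every image of `σ'`.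
If `z = σσ'(y)`, then the words of length 2 occurring in `z` are exactly the words of
length 2 occurring in some `σ(e)` together with `rl`, and every word of length 2 of `z`
occurs with gaps bounded by `2·max|σ'|·max|σ|`. -/
theorem length_two_words_of_proper_image {A0 A1 A2 : Type*}
    [Fintype A1] [Fintype A2] [Nonempty A1]
    (σ : A1 → List A0) (l r : A0)
    (hσ : ∀ b, (σ b).head? = some l ∧ (σ b).getLast? = some r)
    (σ' : A2 → List A1) (hσ' : ∀ e, ∀ b : A1, b ∈ σ' e)
    (y : ℕ → A2) (z : ℕ → A0)
    (hz : IsSeqImage (fun e => wordMap σ (σ' e)) y z) :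
    (∀ u : List A0, u.length = 2 →
        (Occurs z u ↔ ((∃ e : A1, u <:+: σ e) ∨ u = [r, l]))) ∧
    (∀ u : List A0, u.length = 2 → Occurs z u →
        GapsBoundedBy z u
          (2 * (Finset.univ.sup fun e : A2 => (σ' e).length) *
            (Finset.univ.sup fun e : A1 => (σ e).length))) := by
  classical
  set η : A2 → List A0 := fun e => wordMap σ (σ' e) with hηdef
  set M' := Finset.univ.sup fun e : A2 => (σ' e).length with hM'
  set M := Finset.univ.sup fun e : A1 => (σ e).length with hM
  set P := M' * M with hP
  -- basic nonemptiness facts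
  have hσne : ∀ b, σ b ≠ [] := by
    intro b hb
    have := (hσ b).1
    rw [hb] at this; simp at this
  have hσ'ne : ∀ e, σ' e ≠ [] := by
    intro e he
    obtain ⟨b⟩ := (inferInstance : Nonempty A1)
    have := hσ' e b
    rw [he] at this; simp at this
  have hηne : ∀ e, η e ≠ [] := fun e => wordMap_ne_nil hσne (hσ'ne e)
  have hηhead : ∀ e, (η e).head? = some l :=
    fun e => head?_wordMap (fun b => (hσ b).1) (hσ'ne e)
  have hηlast : ∀ e, (η e).getLast? = some r :=
    fun e => getLast?_wordMap (fun b => (hσ b).2) (hσ'ne e)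
  have hηlen : ∀ e, (η e).length ≤ P := by
    intro e
    calc (η e).length ≤ (σ' e).length * M :=
          wordMap_length_le σ M
            (fun b => by rw [hM]; exact Finset.le_sup (f := fun b : A1 => (σ b).length) (Finset.mem_univ b)) (σ' e)
      _ ≤ M' * M := by
          refine Nat.mul_le_mul_right M ?_
          rw [hM']; exact Finset.le_sup (f := fun e : A2 => (σ' e).length) (Finset.mem_univ e)
  have hηpos : ∀ e, 1 ≤ (η e).length := by
    intro e
    have := hηne e
    have := List.length_pos_iff.2 this
    omega
  -- the block structure of z
  set L : ℕ → ℕ := fun n => (wordMap η (seqTake y n)).length with hL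
  have hseqTake_succ : ∀ n, seqTake y (n + 1) = seqTake y n ++ [y n] := by
    intro n; simp [seqTake, List.range_succ]
  have hW : ∀ n, wordMap η (seqTake y (n + 1)) = wordMap η (seqTake y n) ++ η (y n) := by
    intro n
    rw [hseqTake_succ, wordMap_append]
    simp [wordMap]
  have hLsucc : ∀ n, L (n + 1) = L n + (η (y n)).length := by
    intro n; simp [hL, hW n]
  have hL0 : L 0 = 0 := by simp [hL, seqTake, wordMap]
  have hLmono : ∀ n, L n < L (n + 1) := by
    intro n; have := hηpos (y n); rw [hLsucc n]; omega
  have hLge : ∀ n, n ≤ L n := by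
    intro n
    induction n with
    | zero => omega
    | succ n ih => have := hLmono n; omega
  have hzpre : ∀ n, seqTake z (L n) = wordMap η (seqTake y n) := fun n => hz n
  have hblk : ∀ n, seg z (L n) (η (y n)).length = η (y n) := by
    intro n
    have h1 : seqTake z (L (n + 1)) = wordMap η (seqTake y n) ++ η (y n) := by
      rw [hzpre (n + 1), hW n]
    rw [seqTake_eq_seg, hLsucc n, seg_add, ← seqTake_eq_seg, hzpre n, Nat.zero_add] at h1
    exact List.append_cancel_left h1
  have zletter : ∀ n j, j < (η (y n)).length → z (L n + j) = (η (y n)).getD j (z 0) := by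
    intro n j hj
    have h2 := List.getElem_of_eq (hblk n).symm hj
    rw [List.getD_eq_getElem _ _ hj]
    simpa [seg] using h2.symm
  -- occurrences inside blocks
  have hoccblk : ∀ n u, u <:+: η (y n) →
      ∃ k, OccursAt z u k ∧ L n ≤ k ∧ k + u.length ≤ L (n + 1) := by
    intro n u hu
    obtain ⟨s, t, hst⟩ := hu
    have hlen : (η (y n)).length = s.length + (u.length + t.length) := by
      rw [← hst]; simp only [List.length_append]; omega
    have h1 : seg z (L n) s.length ++ (seg z (L n + s.length) u.length ++
        seg z (L n + s.length + u.length) t.length) = s ++ (u ++ t) := by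
      rw [← seg_add, ← seg_add, ← hlen, hblk n, ← hst]
      simp [List.append_assoc]
    have h2 := (List.append_inj h1 (by simp)).2
    have h3 := (List.append_inj h2 (by simp)).1
    refine ⟨L n + s.length, (occursAt_iff_seg z u _).2 h3, by omega, ?_⟩
    rw [hLsucc n]; omega
  -- the boundary word rl
  have hbd : ∀ n, OccursAt z [r, l] (L n + ((η (y n)).length - 1)) := by
    intro n
    have hN := hηpos (y n)
    have hrr : z (L n + ((η (y n)).length - 1)) = r := by
      rw [zletter n _ (by omega), List.getD_eq_getElem _ _ (by omega),
        ← List.getLast_eq_getElem (hηne (y n))]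
      have := hηlast (y n)
      rw [List.getLast?_eq_getLast (hηne (y n))] at this
      injection this
    have hll : z (L n + ((η (y n)).length - 1) + 1) = l := by
      have he : L n + ((η (y n)).length - 1) + 1 = L (n + 1) + 0 := by
        rw [hLsucc n]; omega
      rw [he, zletter (n + 1) 0 (by have := hηpos (y (n + 1)); omega),
        List.getD_eq_getElem _ _ (by have := hηpos (y (n + 1)); omega),
        List.getElem_zero]
      have := hηhead (y (n + 1))
      rw [List.head?_eq_head (hηne (y (n + 1)))] at this
      injection this
    intro k
    fin_cases k
    · simpa using hrr
    · simpa using hll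
  -- classification of occurrences
  have hforward : ∀ u : List A0, u.length = 2 → ∀ i, OccursAt z u i →
      (∃ b : A1, u <:+: σ b) ∨ u = [r, l] := by
    intro u hu i hi
    have huseg : seg z i u.length = u := (occursAt_iff_seg z u i).1 hi
    have hle : i + 2 ≤ L (i + 2) := hLge (i + 2)
    obtain ⟨m, hm⟩ := Nat.exists_eq_add_of_le hle
    have hseg2 : seg z i 2 = u := by rw [← hu]; exact huseg
    have hinf : u <:+: wordMap η (seqTake y (i + 2)) := by
      refine ⟨seg z 0 i, seg z (i + 2) m, ?_⟩
      have e1 : seg z 0 (i + 2 + m) = seg z 0 i ++ (seg z i 2 ++ seg z (i + 2) m) := by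
        rw [show i + 2 + m = i + (2 + m) from by omega, seg_add, seg_add, Nat.zero_add]
      rw [← hzpre (i + 2), seqTake_eq_seg, hm, e1, hseg2]
      simp [List.append_assoc]
    rw [hηdef, wordMap_comp] at hinf
    exact infix_two_wordMap hσ hu hinf
  constructor
  · -- characterization of length-2 words
    intro u hu
    constructor
    · rintro ⟨i, hi⟩
      exact hforward u hu i hi
    · rintro (⟨b, hb⟩ | rfl)
      · have h1 : σ b <:+: η (y 0) := infix_wordMap_of_mem σ (hσ' (y 0) b)
        obtain ⟨k, hk, -, -⟩ := hoccblk 0 u (hb.trans h1)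
        exact ⟨k, hk⟩
      · exact ⟨_, hbd 0⟩
  · -- the gap bound
    intro u hu hocc i j hi hj hij hnone
    suffices hclaim : ∃ k, i < k ∧ k ≤ i + 2 * M' * M ∧ OccursAt z u k by
      obtain ⟨k, hik, hkb, hk⟩ := hclaim
      rcases lt_or_ge k j with hkj | hjk
      · exact absurd hk (hnone k hik hkj)
      · omega
    obtain ⟨n, hn1, hn2⟩ := exists_block L hL0 hLmono i
    have hPP : 2 * M' * M = P + P := by rw [hP]; ring
    have hb0 := hηlen (y n)
    have hb1 := hηlen (y (n + 1))
    have hLs1 := hLsucc n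
    have hLs2 := hLsucc (n + 1)
    rcases hforward u hu i hi with ⟨b, hb⟩ | rfl
    · have h1 : σ b <:+: η (y (n + 1)) := infix_wordMap_of_mem σ (hσ' (y (n + 1)) b)
      obtain ⟨k, hk, hk1, hk2⟩ := hoccblk (n + 1) u (hb.trans h1)
      rw [hu] at hk2
      exact ⟨k, by omega, by omega, hk⟩
    · refine ⟨L (n + 1) + ((η (y (n + 1))).length - 1), ?_, ?_, hbd (n + 1)⟩
      · omega
      · have := hηpos (y (n + 1)); omega


end DurandLR
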